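/- Let G be a finite simple graph with m edges, let p : S → C be a partial coloring of G, and let H be the vertex–edge incidence graph of G with the partial coloring q that precolors each vertex a_u for u ∈ S with p(u) (and precolors no edge-vertex). Then for every nonnegative integer k, there exists a total coloring of G extending p with at least k happy edges if and only if there exists a total coloring of H extending q with at least m + k happy edges. -/

import Mathlib

/-- The number of happy edges (edges whose endpoints share a color) w.r.t. a total coloring. -/
noncomputable def happyEdgeCount {V Col : Type*} (G : SimpleGraph V) (c : V → Col) : ℕ :=
  {e ∈ G.edgeSet | (Sym2.map c e).IsDiag}.ncard

/-- The vertex–edge incidence graph of a graph: a vertex `u` of `G` is adjacent to an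
edge-vertex `e` of `G` exactly when `u` is an endpoint of `e`. -/
def IncidenceGraph {V : Type*} (G : SimpleGraph V) : SimpleGraph (V ⊕ G.edgeSet) where
  Adj x y :=
    match x, y with
    | Sum.inl u, Sum.inr e => u ∈ (e : Sym2 V)
    | Sum.inr e, Sum.inl u => u ∈ (e : Sym2 V)
    | _, _ => False
  symm := by
    exact ⟨by rintro (u | e) (u' | e') h <;> simp_all⟩
  loopless := by
    exact ⟨by rintro (u | e) h <;> simp_all⟩

open Sum Sym2 Finset in
private lemma filter_pair_card' {V : Type*} [Fintype V] [DecidableEq V] (a b : V) (hab : a ≠ b)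
    (P : V → Prop) [DecidablePred P] :
    (Finset.univ.filter (fun u => u ∈ s(a, b) ∧ P u)).card
      = (if P a then 1 else 0) + (if P b then 1 else 0) := by
  have h1 : Finset.univ.filter (fun u => u ∈ s(a, b) ∧ P u)
      = ({a, b} : Finset V).filter P := by
    ext u; simp [Sym2.mem_iff]
  rw [h1, show ({a, b} : Finset V) = insert a {b} from rfl, Finset.filter_insert,
    Finset.filter_singleton]
  by_cases ha : P a <;> by_cases hb : P b <;> simp [ha, hb, hab]

open Sum Sym2 Finset in
private lemma incidence_count {V Col : Type*} [Fintype V] [DecidableEq V] [DecidableEq Col]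
    (G : SimpleGraph V) [DecidableRel G.Adj] (c' : (V ⊕ G.edgeSet) → Col) :
    happyEdgeCount (IncidenceGraph G) c'
      = ∑ e : G.edgeSet, (Finset.univ.filter
          (fun u : V => u ∈ (e : Sym2 V) ∧ c' (inl u) = c' (inr e))).card := by
  classical
  set Tf : Finset (V × G.edgeSet) :=
    Finset.univ.filter (fun x => x.1 ∈ (x.2 : Sym2 V) ∧ c' (inl x.1) = c' (inr x.2)) with hTf
  have himg : {e ∈ (IncidenceGraph G).edgeSet | (Sym2.map c' e).IsDiag}
      = (fun x : V × G.edgeSet => s(inl x.1, inr x.2)) '' ↑Tf := by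
    ext x
    constructor
    · rintro ⟨hx, hd⟩
      induction x with
      | _ a b =>
        rcases a with u | e <;> rcases b with u | e
        · exact absurd hx (by simp [IncidenceGraph, SimpleGraph.mem_edgeSet])
        · rename_i u e
          have hm : u ∈ (e : Sym2 V) := hx
          have hc : c' (inl u) = c' (inr e) := by
            rw [Sym2.map_pair_eq, Sym2.mk_isDiag_iff] at hd; exact hd
          exact ⟨(u, e), by simp [hTf, hm, hc]⟩
        · rename_i e u
          have hm : u ∈ (e : Sym2 V) := hx
          have hc : c' (inl u) = c' (inr e) := by
            rw [Sym2.map_pair_eq, Sym2.mk_isDiag_iff] at hd; exact hd.symm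
          exact ⟨(u, e), by simp [hTf, hm, hc], Sym2.eq_swap⟩
        · exact absurd hx (by simp [IncidenceGraph, SimpleGraph.mem_edgeSet])
    · rintro ⟨⟨u, e⟩, hue, rfl⟩
      simp only [hTf, Finset.coe_filter, Set.mem_setOf_eq, Finset.mem_univ, true_and] at hue
      refine ⟨?_, ?_⟩
      · exact hue.1
      · rw [Sym2.map_pair_eq, Sym2.mk_isDiag_iff]; exact hue.2
  have hinj : Function.Injective (fun x : V × G.edgeSet => s(inl x.1, inr x.2)) := by
    rintro ⟨u, e⟩ ⟨u', e'⟩ h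
    simp only [Sym2.eq_iff] at h
    rcases h with ⟨h1, h2⟩ | ⟨h1, _⟩
    · simp_all
    · exact absurd h1 (by simp)
  rw [happyEdgeCount, himg, Set.ncard_image_of_injective _ hinj, Set.ncard_coe_finset]
  rw [Finset.card_eq_sum_card_fiberwise (f := Prod.snd) (t := Finset.univ)
    (fun x _ => Finset.mem_univ _)]
  refine Finset.sum_congr rfl fun e _ => ?_
  refine Finset.card_bij' (fun x _ => x.1) (fun u _ => (u, e)) ?_ ?_ ?_ ?_
  · rintro ⟨u, e'⟩ hx
    simp only [hTf, Finset.mem_filter, Finset.mem_univ, true_and] at hx ⊢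
    obtain ⟨⟨h1, h2⟩, rfl⟩ := hx
    exact ⟨h1, h2⟩
  · intro u hu
    simp only [Finset.mem_filter, Finset.mem_univ, true_and] at hu
    simp [hTf, hu.1, hu.2]
  · rintro ⟨u, e'⟩ hx
    simp only [hTf, Finset.mem_filter] at hx
    simp [hx.2]
  · intro u hu; rfl

open Sum Sym2 Finset in
private lemma graph_count {V Col : Type*} [Fintype V] [DecidableEq V] [DecidableEq Col]
    (G : SimpleGraph V) [DecidableRel G.Adj] (c : V → Col) :
    happyEdgeCount G c
      = ∑ e : G.edgeSet, (if (Sym2.map c (e : Sym2 V)).IsDiag then 1 else 0) := by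
  classical
  have h1 : {e ∈ G.edgeSet | (Sym2.map c e).IsDiag}
      = Subtype.val '' {e : G.edgeSet | (Sym2.map c (e : Sym2 V)).IsDiag} := by
    ext x
    constructor
    · rintro ⟨hx, hd⟩; exact ⟨⟨x, hx⟩, hd, rfl⟩
    · rintro ⟨⟨e, he⟩, hd, rfl⟩; exact ⟨he, hd⟩
  rw [happyEdgeCount, h1, Set.ncard_image_of_injective _ Subtype.val_injective,
    Set.ncard_eq_toFinset_card', Set.toFinset_setOf, Finset.card_filter]

open Sum Sym2 Finset in
private lemma per_edge_le {V Col : Type*} [Fintype V] [DecidableEq V] [DecidableEq Col]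
    (c : V → Col) (col : Col) (e : Sym2 V) (he : ¬ e.IsDiag) :
    (Finset.univ.filter (fun u => u ∈ e ∧ c u = col)).card
      ≤ 1 + (if (Sym2.map c e).IsDiag then 1 else 0) := by
  induction e with
  | _ a b =>
    have hab : a ≠ b := by simpa using he
    rw [filter_pair_card' a b hab]
    simp only [Sym2.map_pair_eq, Sym2.mk_isDiag_iff]
    by_cases h1 : c a = col <;> by_cases h2 : c b = col <;> simp_all

open Sum Sym2 Finset in
private lemma per_edge_ge {V Col : Type*} [Fintype V] [DecidableEq V] [DecidableEq Col]
    (c : V → Col) (e : Sym2 V) (he : ¬ e.IsDiag) :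
    1 + (if (Sym2.map c e).IsDiag then 1 else 0)
      ≤ (Finset.univ.filter (fun u => u ∈ e ∧ c u = c (Quot.out e).1)).card := by
  induction e with
  | _ a b =>
    have hab : a ≠ b := by simpa using he
    rw [filter_pair_card' a b hab]
    simp only [Sym2.map_pair_eq, Sym2.mk_isDiag_iff]
    have ho : (Quot.out (s(a,b) : Sym2 V)).1 = a ∨ (Quot.out (s(a,b) : Sym2 V)).1 = b :=
      Sym2.mem_iff.mp (Sym2.out_fst_mem _)
    rcases ho with h | h <;> rw [h] <;>
      by_cases hd : c a = c b <;> simp [hd, eq_comm]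

/-- `G` with partial coloring `p` admits an extension with at least `k` happy edges iff the
incidence graph of `G`, precolored by `p` on the vertex side, admits an extension with at
least `m + k` happy edges. -/
theorem incidenceGraph_happyEdges_iff
    {V Col : Type*} [Fintype V] [DecidableEq V] (G : SimpleGraph V) [DecidableRel G.Adj]
    (S : Set V) (p : S → Col) (k : ℕ) :
    (∃ c : V → Col, (∀ v (hv : v ∈ S), c v = p ⟨v, hv⟩) ∧ k ≤ happyEdgeCount G c) ↔
    (∃ c' : (V ⊕ G.edgeSet) → Col, (∀ v (hv : v ∈ S), c' (Sum.inl v) = p ⟨v, hv⟩) ∧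
      G.edgeSet.ncard + k ≤ happyEdgeCount (IncidenceGraph G) c') := by
  classical
  have hm : G.edgeSet.ncard = (Finset.univ : Finset G.edgeSet).card := by
    rw [Set.ncard_eq_toFinset_card', Set.toFinset_card, Finset.card_univ]
  constructor
  · rintro ⟨c, hc, hk⟩
    set c2 : (V ⊕ G.edgeSet) → Col := Sum.elim c (fun e => c (Quot.out (e : Sym2 V)).1)
      with hc2
    refine ⟨c2, fun v hv => hc v hv, ?_⟩
    rw [incidence_count]
    rw [graph_count] at hk
    have hle : ∀ e : G.edgeSet,
        1 + (if (Sym2.map c (e : Sym2 V)).IsDiag then 1 else 0)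
          ≤ (Finset.univ.filter (fun u : V => u ∈ (e : Sym2 V) ∧
              c2 (Sum.inl u) = c2 (Sum.inr e))).card := by
      intro e
      simp only [hc2, Sum.elim_inl, Sum.elim_inr]
      exact per_edge_ge c e (G.not_isDiag_of_mem_edgeSet e.2)
    have hsum := Finset.sum_le_sum (fun e (_ : e ∈ Finset.univ) => hle e)
    rw [Finset.sum_add_distrib, Finset.sum_const, smul_eq_mul, mul_one] at hsum
    omega
  · rintro ⟨c', hc', hk⟩
    refine ⟨fun v => c' (Sum.inl v), fun v hv => hc' v hv, ?_⟩
    rw [incidence_count] at hk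
    rw [graph_count]
    have hle : ∀ e : G.edgeSet,
        (Finset.univ.filter (fun u : V => u ∈ (e : Sym2 V) ∧
            c' (Sum.inl u) = c' (Sum.inr e))).card
          ≤ 1 + (if (Sym2.map (fun v => c' (Sum.inl v)) (e : Sym2 V)).IsDiag then 1 else 0) :=
      fun e => per_edge_le (fun v => c' (Sum.inl v)) (c' (Sum.inr e)) e
        (G.not_isDiag_of_mem_edgeSet e.2)
    have hsum := Finset.sum_le_sum (fun e (_ : e ∈ Finset.univ) => hle e)
    rw [Finset.sum_add_distrib, Finset.sum_const, smul_eq_mul, mul_one] at hsum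
    omega
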